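/- For every q ∈ (0,1), the set { x ∈ (0,1] : h(x) = h(q) + q·log(q)·(log x − log q) } contains x = q and has at most two elements. -/

import Mathlib

open scoped BigOperators

attribute [local instance] Classical.propDecidable

noncomputable section

namespace LowerTails

/-- The edge set of the complete graph `K_n`: unordered pairs of distinct elements of `Fin n`. -/
abbrev Edge (n : ℕ) := {e : Sym2 (Fin n) // ¬ e.IsDiag}

/-- A graph on `[n]`, identified with its edge-indicator vector in `{0,1}^{E(K_n)}`. -/
abbrev EGraph (n : ℕ) := Edge n → Bool

/-- The probability of the configuration `G` under the product measure where edge `e`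
is present independently with probability `q e`. -/
def wt {n : ℕ} (q : Edge n → ℝ) (G : EGraph n) : ℝ :=
  ∏ e : Edge n, if G e then q e else 1 - q e

/-- Probability of the event `S` under `G(n, q)`. -/
def pr {n : ℕ} (q : Edge n → ℝ) (S : Set (EGraph n)) : ℝ :=
  ∑ G : EGraph n, if G ∈ S then wt q G else 0

/-- Conditional probability of `S` given `L` under `G(n, q)`. -/
def cpr {n : ℕ} (q : Edge n → ℝ) (L S : Set (EGraph n)) : ℝ :=
  pr q (S ∩ L) / pr q L

/-- Conditional expectation of `f` given the event `L` under `G(n, q)`. -/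
def cex {n : ℕ} (q : Edge n → ℝ) (L : Set (EGraph n)) (f : EGraph n → ℝ) : ℝ :=
  (∑ G : EGraph n, if G ∈ L then wt q G * f G else 0) / pr q L

/-- The simple graph on `Fin n` associated to an edge-indicator vector. -/
def toSG {n : ℕ} (G : EGraph n) : SimpleGraph (Fin n) :=
  SimpleGraph.fromEdgeSet {e : Sym2 (Fin n) | ∃ h : ¬e.IsDiag, G ⟨e, h⟩ = true}

/-- The number of copies of `H` in `G`, i.e. the number of subgraphs of `G` isomorphic to `H`. -/
def countCopies {k n : ℕ} (H : SimpleGraph (Fin k)) (G : SimpleGraph (Fin n)) : ℕ :=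
  Set.ncard {K : G.Subgraph | Nonempty (H ≃g K.coe)}

/-- `N_H(G)` for an edge-indicator vector `G`, as a real number. -/
def NH {k n : ℕ} (H : SimpleGraph (Fin k)) (G : EGraph n) : ℝ :=
  countCopies H (toSG G)

/-- `E[N_H(q)]`, the expected number of copies of `H` in `G(n, q)`. -/
def expNH {k : ℕ} (H : SimpleGraph (Fin k)) {n : ℕ} (q : Edge n → ℝ) : ℝ :=
  ∑ G : EGraph n, wt q G * NH H G

/-- `N_H(K_n)`, the number of copies of `H` in the complete graph `K_n`. -/
def NHKn {k : ℕ} (H : SimpleGraph (Fin k)) (n : ℕ) : ℝ :=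
  countCopies H (⊤ : SimpleGraph (Fin n))

/-- The lower tail event `L_p(H, η) = {G : N_H(G) ≤ η E[N_H(p)]}`. -/
def lowerTail {k : ℕ} (H : SimpleGraph (Fin k)) (n : ℕ) (p η : ℝ) : Set (EGraph n) :=
  {G | NH H G ≤ η * expNH H (fun _ : Edge n => p)}

/-- `h(x) = x log x - x + 1` (with `h(0) = 1` since `Real.log 0 = 0`). -/
def hfun (x : ℝ) : ℝ := x * Real.log x - x + 1

/-- The relative entropy `i_p(t)` of `Ber(t)` with respect to `Ber(p)`. -/
def ip (p t : ℝ) : ℝ := t * Real.log (t / p) + (1 - t) * Real.log ((1 - t) / (1 - p))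

/-- The number of edges of `H` as a real number. -/
def eH {k : ℕ} (H : SimpleGraph (Fin k)) : ℝ := H.edgeSet.ncard

/-- The defining equation of the threshold `η_H`, for a graph with `e` edges. -/
def etaEq (e η : ℝ) : Prop :=
  hfun (η ^ (1 / η)) =
    hfun (η ^ (1 / e)) + η ^ (1 / e) * Real.log (η ^ (1 / e)) *
      (Real.log (η ^ (1 / η)) - Real.log (η ^ (1 / e)))

/-- The 2-density `m_2(H)`. -/
def m2 {k : ℕ} (H : SimpleGraph (Fin k)) : ℝ :=
  sSup {x : ℝ | ∃ F : H.Subgraph, 2 ≤ F.edgeSet.ncard ∧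
    x = ((F.edgeSet.ncard : ℝ) - 1) / ((F.verts.ncard : ℝ) - 2)}

/-- The variational problem `Φ_p(H, η)`. -/
def PhiP {k : ℕ} (H : SimpleGraph (Fin k)) (n : ℕ) (p η : ℝ) : ℝ :=
  sInf {x : ℝ | ∃ q : Edge n → ℝ, (∀ e, q e ∈ Set.Icc (0:ℝ) 1) ∧
    expNH H q ≤ η * expNH H (fun _ : Edge n => p) ∧ x = ∑ e : Edge n, ip p (q e)}

/-- The sparse limit variational problem `Φ(H, η)`. -/
def Phi {k : ℕ} (H : SimpleGraph (Fin k)) (n : ℕ) (η : ℝ) : ℝ :=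
  sInf {x : ℝ | ∃ q : Edge n → ℝ, (∀ e, q e ∈ Set.Icc (0:ℝ) 1) ∧
    expNH H q ≤ η * NHKn H n ∧ x = ∑ e : Edge n, hfun (q e)}

/-- The cut norm of an `n × n` real matrix. -/
def cutNorm {n : ℕ} (M : Matrix (Fin n) (Fin n) ℝ) : ℝ :=
  sSup {x : ℝ | ∃ a b : Fin n → ℝ, (∀ i, a i ∈ Set.Icc (0:ℝ) 1) ∧ (∀ i, b i ∈ Set.Icc (0:ℝ) 1) ∧
    x = |∑ i : Fin n, ∑ j : Fin n, a i * M i j * b j| / (n : ℝ) ^ 2}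

/-- The symmetric matrix with entries `q_{ij} - c` off the diagonal, `0` on the diagonal. -/
def devMat {n : ℕ} (q : Edge n → ℝ) (c : ℝ) : Matrix (Fin n) (Fin n) ℝ :=
  fun i j => if h : i = j then 0 else q ⟨s(i, j), by simp [Sym2.mk_isDiag_iff, h]⟩ - c

/-- The edge-indicator vector of `G` as a real vector. -/
def ind {n : ℕ} (G : EGraph n) : Edge n → ℝ := fun e => if G e then 1 else 0

/-- `Y_A = ∏_{e ∈ A} Y_e`. -/
def YA {n : ℕ} (A : Finset (Edge n)) (G : EGraph n) : ℝ :=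
  ∏ e ∈ A, (if G e then (1:ℝ) else 0)

/-- The event that a configuration agrees with `G0` on the set `W`. -/
def agreeOn {n : ℕ} (W : Finset (Edge n)) (G0 : EGraph n) : Set (EGraph n) :=
  {G | ∀ w ∈ W, G w = G0 w}

/-- The conditional expectation `E[f | (Y_w)_{w ∈ W}]` under the pmf `μ`, evaluated
at the outcome `G0` (i.e. given that `Y` agrees with `G0` on `W`). -/
def condExpW {n : ℕ} (μ : EGraph n → ℝ) (W : Finset (Edge n)) (f : EGraph n → ℝ)
    (G0 : EGraph n) : ℝ :=
  (∑ G : EGraph n, if G ∈ agreeOn W G0 then μ G * f G else 0) /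
    (∑ G : EGraph n, if G ∈ agreeOn W G0 then μ G else 0)

/-- The pmf of `G(n, p)` conditioned on the lower tail event `L_p(H, η)`. -/
def ltPMF {k : ℕ} (H : SimpleGraph (Fin k)) (n : ℕ) (p η : ℝ) : EGraph n → ℝ :=
  fun G => (if G ∈ lowerTail H n p η then wt (fun _ : Edge n => p) G else 0) /
    pr (fun _ : Edge n => p) (lowerTail H n p η)

/-- The hyperedges of the hypergraph `H(H)`: edge sets of copies of `H` in `K_n`. -/
def copySets {k : ℕ} (H : SimpleGraph (Fin k)) (n : ℕ) : Finset (Finset (Edge n)) :=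
  Finset.univ.filter (fun A => ∃ f : Fin k ↪ Fin n,
    ∀ e : Edge n, e ∈ A ↔ ∃ u v : Fin k, H.Adj u v ∧ (e : Sym2 (Fin n)) = s(f u, f v))

/-- The correlation `D_W(B, b)` as a random variable (a function of the outcome `G0`). -/
def DW {n : ℕ} (μ : EGraph n → ℝ) (W : Finset (Edge n)) (B : Finset (Edge n)) (b : Edge n)
    (G0 : EGraph n) : ℝ :=
  condExpW μ W (YA B) G0 - condExpW μ W (YA (B.erase b)) G0 * condExpW μ W (YA {b}) G0

/-- The energy `E_H(W)` of a set `W` with respect to the pmf `μ`. -/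
def energy {k n : ℕ} (H : SimpleGraph (Fin k)) (μ : EGraph n → ℝ) (p : ℝ)
    (W : Finset (Edge n)) : ℝ :=
  ∑ G0 : EGraph n, μ G0 *
    ∑ A ∈ (copySets H n).filter (fun A => Disjoint A W),
      ∑ B ∈ A.powerset.filter (fun B => 2 ≤ B.card),
        ∑ b ∈ B, (DW μ W B b G0) ^ 2 /
          ((Nat.choose H.edgeSet.ncard B.card : ℝ) * (B.card : ℝ) * p ^ (2 * B.card))

end LowerTails

namespace LowerTails

/-- auxiliary function ψ_c -/
private def psiAux (c x : ℝ) : ℝ := x * Real.log x - x - c * Real.log x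

private lemma psiAux_hasDerivAt (c : ℝ) {x : ℝ} (hx : 0 < x) :
    HasDerivAt (psiAux c) (Real.log x - c * x⁻¹) x := by
  have h1 := Real.hasDerivAt_mul_log hx.ne'
  have h2 := (Real.hasDerivAt_log hx.ne').const_mul c
  have h3 := hasDerivAt_id x
  have := (h1.sub h3).sub h2
  convert this using 1
  · rfl
  · rfl
  · funext y; simp only [psiAux, Pi.sub_apply, id]
  · ring

private lemma rolle_mval (c t1 t2 : ℝ) (h1 : 0 < t1) (h12 : t1 < t2)
    (hψ : psiAux c t1 = psiAux c t2) :
    ∃ z ∈ Set.Ioo t1 t2, z * Real.log z = c := by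
  have hcont : ContinuousOn (psiAux c) (Set.Icc t1 t2) := fun x hx =>
    ((psiAux_hasDerivAt c (lt_of_lt_of_le h1 hx.1)).continuousAt).continuousWithinAt
  obtain ⟨z, hz, hz0⟩ := exists_deriv_eq_zero h12 hcont hψ
  have hzpos : 0 < z := lt_trans h1 hz.1
  have hd := (psiAux_hasDerivAt c hzpos).deriv
  rw [hz0] at hd
  refine ⟨z, hz, ?_⟩
  have : Real.log z = c * z⁻¹ := by linarith
  field_simp at this
  linarith [this]

private lemma no_three_m (z1 z2 z3 c : ℝ) (h1 : 0 < z1) (h12 : z1 < z2) (h23 : z2 < z3)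
    (h3 : z3 ≤ 1) (hm1 : z1 * Real.log z1 = c) (hm2 : z2 * Real.log z2 = c)
    (hm3 : z3 * Real.log z3 = c) : False := by
  have hanti : StrictAntiOn (fun x => x * Real.log x) (Set.Ioc 0 (Real.exp (-1))) := by
    apply strictAntiOn_of_deriv_neg (convex_Ioc _ _)
    · intro x hx
      exact ((Real.hasDerivAt_mul_log hx.1.ne').continuousAt).continuousWithinAt
    · intro x hx
      rw [interior_Ioc] at hx
      rw [(Real.hasDerivAt_mul_log hx.1.ne').deriv]
      have : Real.log x < Real.log (Real.exp (-1)) :=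
        Real.log_lt_log hx.1 hx.2
      rw [Real.log_exp] at this
      linarith
  have hmono : StrictMonoOn (fun x => x * Real.log x) (Set.Icc (Real.exp (-1)) 1) := by
    apply strictMonoOn_of_deriv_pos (convex_Icc _ _)
    · intro x hx
      have hx0 : 0 < x := lt_of_lt_of_le (Real.exp_pos _) hx.1
      exact ((Real.hasDerivAt_mul_log hx0.ne').continuousAt).continuousWithinAt
    · intro x hx
      rw [interior_Icc] at hx
      have hx0 : 0 < x := lt_trans (Real.exp_pos _) hx.1
      rw [(Real.hasDerivAt_mul_log hx0.ne').deriv]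
      have : Real.log (Real.exp (-1)) < Real.log x := Real.log_lt_log (Real.exp_pos _) hx.1
      rw [Real.log_exp] at this
      linarith
  rcases le_or_gt z2 (Real.exp (-1)) with h | h
  · have := hanti ⟨h1, le_of_lt (lt_of_lt_of_le h12 h)⟩ ⟨lt_trans h1 h12, h⟩ h12
    simp only at this
    rw [hm1, hm2] at this
    exact lt_irrefl c this
  · have := hmono ⟨le_of_lt h, le_of_lt (lt_of_lt_of_le h23 h3)⟩
      ⟨le_of_lt (lt_trans h h23), h3⟩ h23
    simp only at this
    rw [hm2, hm3] at this
    exact lt_irrefl c this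

private lemma no_three_psi (c t1 t2 t3 : ℝ) (h1 : 0 < t1) (h12 : t1 < t2) (h23 : t2 < t3)
    (h3 : t3 ≤ 1) (hp12 : psiAux c t1 = psiAux c t2) (hp23 : psiAux c t2 = psiAux c t3)
    (hw : ∃ w, (w = t1 ∨ w = t2 ∨ w = t3) ∧ w * Real.log w = c) : False := by
  obtain ⟨za, hza, hma⟩ := rolle_mval c t1 t2 h1 h12 hp12
  obtain ⟨zb, hzb, hmb⟩ := rolle_mval c t2 t3 (lt_trans h1 h12) h23 hp23
  obtain ⟨w, hw, hmw⟩ := hw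
  rcases hw with rfl | rfl | rfl
  · exact no_three_m w za zb c h1 hza.1 (lt_trans hza.2 hzb.1)
      (le_of_lt (lt_of_lt_of_le hzb.2 h3)) hmw hma hmb
  · exact no_three_m za w zb c (lt_trans h1 hza.1) hza.2 hzb.1
      (le_of_lt (lt_of_lt_of_le hzb.2 h3)) hma hmw hmb
  · exact no_three_m za zb w c (lt_trans h1 hza.1) (lt_trans hza.2 hzb.1) hzb.2 h3
      hma hmb hmw



/-- the tangent-line equation has `x = q` as a solution and at most two
solutions in `(0, 1]`. -/
theorem statement12 (q : ℝ) (hq : q ∈ Set.Ioo (0:ℝ) 1) :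
    q ∈ {x : ℝ | x ∈ Set.Ioc (0:ℝ) 1 ∧
        hfun x = hfun q + q * Real.log q * (Real.log x - Real.log q)} ∧
      ∃ a b : ℝ, {x : ℝ | x ∈ Set.Ioc (0:ℝ) 1 ∧
        hfun x = hfun q + q * Real.log q * (Real.log x - Real.log q)} ⊆ {a, b} := by
  set c := q * Real.log q with hc
  set S := {x : ℝ | x ∈ Set.Ioc (0:ℝ) 1 ∧
      hfun x = hfun q + q * Real.log q * (Real.log x - Real.log q)} with hS
  have hqS : q ∈ S := ⟨⟨hq.1, le_of_lt hq.2⟩, by ring⟩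
  refine ⟨hqS, ?_⟩
  -- membership implies psi equality
  have hpsi : ∀ x ∈ S, psiAux c x = psiAux c q := by
    intro x hx
    have := hx.2
    simp only [hfun] at this
    simp only [psiAux]
    linear_combination this
  -- key uniqueness
  have huniq : ∀ x ∈ S, ∀ y ∈ S, x ≠ q → y ≠ q → x = y := by
    intro x hx y hy hxq hyq
    by_contra hxy
    have hmq : q * Real.log q = c := rfl
    have key : ∀ u v : ℝ, u ∈ S → v ∈ S → u < v → u ≠ q → v ≠ q → False := by
      intro u v hu hv huv huq hvq
      have hu1 : 0 < u := hu.1.1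
      have hv1 : v ≤ 1 := hv.1.2
      have hpu := hpsi u hu
      have hpv := hpsi v hv
      rcases lt_trichotomy q u with h | h | h
      · exact no_three_psi c q u v hq.1 h (lt_of_le_of_lt (le_refl u) huv) hv1
          hpu.symm (hpu.trans hpv.symm) ⟨q, Or.inl rfl, hmq⟩
      · exact absurd h.symm huq
      · rcases lt_trichotomy q v with h' | h' | h'
        · exact no_three_psi c u q v hu1 h h' hv1 hpu (hpv.symm)
            ⟨q, Or.inr (Or.inl rfl), hmq⟩
        · exact absurd h'.symm hvq
        · exact no_three_psi c u v q hu1 huv h' (le_of_lt hq.2)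
            (hpu.trans hpv.symm) hpv ⟨q, Or.inr (Or.inr rfl), hmq⟩
    rcases lt_trichotomy x y with h | h | h
    · exact key x y hx hy h hxq hyq
    · exact hxy h
    · exact key y x hy hx h hyq hxq
  by_cases hex : ∃ x ∈ S, x ≠ q
  · obtain ⟨x0, hx0, hx0q⟩ := hex
    refine ⟨q, x0, fun x hx => ?_⟩
    by_cases h : x = q
    · exact Or.inl h
    · exact Or.inr (huniq x hx x0 hx0 h hx0q)
  · refine ⟨q, q, fun x hx => ?_⟩
    push_neg at hex
    simp [hex x hx]


end LowerTails
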